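/- arXiv:math/0611217 — 4 statements merged into one kernel-verified Lean document; each statement's English description precedes it below -/
import Mathlib

section
/- Let (f_n) be a sequence of measurable functions on a measurable space X with |f_n| ≤ 1 for all n, converging pointwise to f, and let (μ_n) be probability measures on X converging setwise to a probability measure μ (i.e. μ_n(A) → μ(A) for every measurable A). Then ∫ f_n dμ_n → ∫ f dμ. -/
open MeasureTheory Filter Topology

/-- Setwise convergence of probability measures implies convergence of integrals of a fixed
bounded measurable nonnegative function, via the layercake formula. -/
lemma aux_setwise_integral_nonneg {X : Type*} [MeasurableSpace X]
    (g : X → ℝ) (μ : Measure X) (μn : ℕ → Measure X)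
    [IsProbabilityMeasure μ] [∀ n, IsProbabilityMeasure (μn n)]
    (hg : Measurable g) (h0 : ∀ x, 0 ≤ g x) (h1 : ∀ x, g x ≤ 1)
    (hset : ∀ A : Set X, MeasurableSet A →
      Tendsto (fun n => (μn n A).toReal) atTop (𝓝 ((μ A).toReal))) :
    Tendsto (fun n => ∫ x, g x ∂(μn n)) atTop (𝓝 (∫ x, g x ∂μ)) := by
  have hint : ∀ (ν : Measure X) [IsProbabilityMeasure ν], Integrable g ν := by
    intro ν _
    refine (integrable_const (1 : ℝ)).mono' hg.aestronglyMeasurable ?_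
    filter_upwards with x
    rw [Real.norm_eq_abs, abs_of_nonneg (h0 x)]; exact h1 x
  have key : ∀ (ν : Measure X) [IsProbabilityMeasure ν],
      ∫ x, g x ∂ν = ∫ t in Set.Ioc (0:ℝ) 1, (ν {a | t ≤ g a}).toReal := by
    intro ν _
    exact (hint ν).integral_eq_integral_Ioc_meas_le
      (Filter.Eventually.of_forall h0) (Filter.Eventually.of_forall h1)
  simp only [key]
  refine tendsto_integral_filter_of_dominated_convergence (fun _ => (1:ℝ)) ?_ ?_ ?_ ?_
  · filter_upwards with n
    have hanti : Antitone (fun t : ℝ => μn n {a | t ≤ g a}) :=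
      fun s t hst => measure_mono (fun a ha => le_trans hst ha)
    exact (Measurable.ennreal_toReal hanti.measurable).aestronglyMeasurable.restrict
  · filter_upwards with n
    filter_upwards with t
    rw [Real.norm_eq_abs, abs_of_nonneg ENNReal.toReal_nonneg]
    exact ENNReal.toReal_le_of_le_ofReal zero_le_one (by simpa using prob_le_one)
  · exact integrableOn_const measure_Ioc_lt_top.ne (by simp)
  · filter_upwards with t
    exact hset {a | t ≤ g a} (hg measurableSet_Ici)

/-- Same, for functions bounded by 1 in absolute value. -/
lemma aux_setwise_integral {X : Type*} [MeasurableSpace X]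
    (g : X → ℝ) (μ : Measure X) (μn : ℕ → Measure X)
    [IsProbabilityMeasure μ] [∀ n, IsProbabilityMeasure (μn n)]
    (hg : Measurable g) (hb : ∀ x, |g x| ≤ 1)
    (hset : ∀ A : Set X, MeasurableSet A →
      Tendsto (fun n => (μn n A).toReal) atTop (𝓝 ((μ A).toReal))) :
    Tendsto (fun n => ∫ x, g x ∂(μn n)) atTop (𝓝 (∫ x, g x ∂μ)) := by
  set h : X → ℝ := fun x => (g x + 1) / 2 with hh
  have h0 : ∀ x, 0 ≤ h x := fun x => by
    have := abs_le.1 (hb x); simp only [hh]; linarith [this.1]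
  have h1 : ∀ x, h x ≤ 1 := fun x => by
    have := abs_le.1 (hb x); simp only [hh]; linarith [this.2]
  have hgint : ∀ (ν : Measure X) [IsProbabilityMeasure ν], Integrable g ν := by
    intro ν _
    refine (integrable_const (1 : ℝ)).mono' hg.aestronglyMeasurable ?_
    filter_upwards with x
    rw [Real.norm_eq_abs]; exact hb x
  have hrel : ∀ (ν : Measure X) [IsProbabilityMeasure ν],
      ∫ x, g x ∂ν = 2 * ∫ x, h x ∂ν - 1 := by
    intro ν _
    have : ∫ x, h x ∂ν = (∫ x, g x ∂ν + 1) / 2 := by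
      simp only [hh]
      rw [integral_div, integral_add (hgint ν) (integrable_const 1), integral_const]
      simp
    rw [this]; ring
  have hmain := aux_setwise_integral_nonneg h μ μn
    ((hg.add measurable_const).div_const 2) h0 h1 hset
  have := (hmain.const_mul 2).sub_const 1
  simp only [← hrel] at this
  exact this

/-- If `|fₙ| ≤ 1`, `fₙ → f` pointwise and the probability measures `μₙ → μ` setwise,
then `∫ fₙ dμₙ → ∫ f dμ`. -/
theorem stmt1 {X : Type*} [MeasurableSpace X]
    (f : X → ℝ) (fn : ℕ → X → ℝ)
    (μ : Measure X) (μn : ℕ → Measure X)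
    [IsProbabilityMeasure μ] [∀ n, IsProbabilityMeasure (μn n)]
    (hmeas : ∀ n, Measurable (fn n))
    (hbdd : ∀ n x, |fn n x| ≤ 1)
    (hpt : ∀ x, Tendsto (fun n => fn n x) atTop (𝓝 (f x)))
    (hset : ∀ A : Set X, MeasurableSet A →
      Tendsto (fun n => (μn n A).toReal) atTop (𝓝 ((μ A).toReal))) :
    Tendsto (fun n => ∫ x, fn n x ∂(μn n)) atTop (𝓝 (∫ x, f x ∂μ)) := by
  have hf : Measurable f :=
    measurable_of_tendsto_metrizable hmeas (tendsto_pi_nhds.2 hpt)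
  have hfb : ∀ x, |f x| ≤ 1 := by
    intro x
    exact le_of_tendsto ((hpt x).abs) (Filter.Eventually.of_forall (fun n => hbdd n x))
  -- integrability of everything against any probability measure
  have hint : ∀ (g : X → ℝ), Measurable g → (∀ x, |g x| ≤ 1) →
      ∀ (ν : Measure X) [IsProbabilityMeasure ν], Integrable g ν := by
    intro g hg hb ν _
    refine (integrable_const (1 : ℝ)).mono' hg.aestronglyMeasurable ?_
    filter_upwards with x
    rw [Real.norm_eq_abs]; exact hb x
  -- part 2: ∫ f dμn → ∫ f dμ
  have part2 : Tendsto (fun n => ∫ x, f x ∂(μn n)) atTop (𝓝 (∫ x, f x ∂μ)) :=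
    aux_setwise_integral f μ μn hf hfb hset
  -- part 1: ∫ fn dμn - ∫ f dμn → 0
  have part1 : Tendsto (fun n => ∫ x, fn n x ∂(μn n) - ∫ x, f x ∂(μn n)) atTop (𝓝 0) := by
    have heq : ∀ n, ∫ x, fn n x ∂(μn n) - ∫ x, f x ∂(μn n)
        = ∫ x, (fn n x - f x) ∂(μn n) := fun n =>
      (integral_sub (hint (fn n) (hmeas n) (hbdd n) (μn n)) (hint f hf hfb (μn n))).symm
    simp only [heq]
    rw [NormedAddCommGroup.tendsto_nhds_zero]
    intro ε hε
    have hδ : (0:ℝ) < ε / 6 := by linarith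
    obtain ⟨t, -, ht, htm, htu⟩ := tendstoUniformlyOn_of_ae_tendsto
      (f := fn) (g := f) (μ := μ) (s := Set.univ)
      (fun n => (hmeas n).stronglyMeasurable) hf.stronglyMeasurable
      MeasurableSet.univ (measure_ne_top μ _)
      (Filter.Eventually.of_forall (fun x _ => hpt x)) hδ
    have hμt : (μ t).toReal ≤ ε / 6 := ENNReal.toReal_le_of_le_ofReal hδ.le htm
    have hev1 : ∀ᶠ n in atTop, ∀ x ∈ Set.univ \ t, dist (f x) (fn n x) < ε / 6 :=
      (Metric.tendstoUniformlyOn_iff.1 htu) _ hδ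
    have hev2 : ∀ᶠ n in atTop, (μn n t).toReal < (μ t).toReal + ε / 6 :=
      (hset t ht).eventually (eventually_lt_nhds (by linarith))
    filter_upwards [hev1, hev2] with n h1 h2
    have hbound : ∀ x, ‖fn n x - f x‖ ≤ t.indicator (fun _ => (2:ℝ)) x + ε / 6 := by
      intro x
      by_cases hx : x ∈ t
      · rw [Set.indicator_of_mem hx]
        have := hbdd n x; have := hfb x
        rw [Real.norm_eq_abs]
        calc |fn n x - f x| ≤ |fn n x| + |f x| := abs_sub _ _
          _ ≤ 2 + ε / 6 := by linarith
      · rw [Set.indicator_of_notMem hx]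
        have := h1 x ⟨Set.mem_univ x, hx⟩
        rw [Real.dist_eq] at this
        rw [Real.norm_eq_abs, abs_sub_comm]
        linarith
    have hsub : Integrable (fun x => fn n x - f x) (μn n) := by
      have hb2 : ∀ x, |fn n x - f x| ≤ 1 + 1 := by
        intro x
        calc |fn n x - f x| ≤ |fn n x| + |f x| := abs_sub _ _
          _ ≤ 1 + 1 := add_le_add (hbdd n x) (hfb x)
      refine (integrable_const (2 : ℝ)).mono'
        ((hmeas n).sub hf).aestronglyMeasurable ?_
      filter_upwards with x
      rw [Real.norm_eq_abs]; linarith [hb2 x]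
    have hindint : Integrable (fun x => t.indicator (fun _ => (2:ℝ)) x + ε / 6) (μn n) :=
      ((integrable_const (2:ℝ)).indicator ht).add (integrable_const _)
    calc ‖∫ x, (fn n x - f x) ∂(μn n)‖
        ≤ ∫ x, ‖fn n x - f x‖ ∂(μn n) := norm_integral_le_integral_norm _
      _ ≤ ∫ x, (t.indicator (fun _ => (2:ℝ)) x + ε / 6) ∂(μn n) :=
          integral_mono hsub.norm hindint hbound
      _ = 2 * (μn n t).toReal + ε / 6 := by
          rw [integral_add ((integrable_const (2:ℝ)).indicator ht) (integrable_const _),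
            integral_indicator_const _ ht, integral_const]
          simp [mul_comm]
          rfl
      _ < 2 * ((μ t).toReal + ε / 6) + ε / 6 := by nlinarith [h2]
      _ ≤ 2 * (ε / 6 + ε / 6) + ε / 6 := by nlinarith [hμt]
      _ < ε := by linarith
  have := part1.add part2
  simp only [sub_add_cancel, zero_add] at this
  exact this
end

section
/- Let P, P_0, P_1, … be transition kernels on a measurable space X such that: (i) P_n(x,A) → P(x,A) for every x and measurable A; (ii) P has invariant distribution π, each P_n has invariant distribution π_n, and there exist ρ ∈ (0,1) and C with ‖P^k − π‖ ≤ Cρ^k and ‖P_n^k − π_n‖ ≤ Cρ^k for all n,k. Then π_n(f) → π(f) for every bounded measurable function f. -/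
open MeasureTheory ProbabilityTheory Filter Topology

noncomputable def iterKer {X : Type*} [MeasurableSpace X] (P : Kernel X X) : ℕ → Kernel X X
  | 0 => Kernel.id
  | n + 1 => (iterKer P n) ∘ₖ P

section Aux

variable {X : Type*} [MeasurableSpace X]

lemma bdd_integrable (μ : Measure X) [IsFiniteMeasure μ] {f : X → ℝ} (hf : Measurable f)
    {M : ℝ} (hb : ∀ x, |f x| ≤ M) : Integrable f μ :=
  (integrable_const M).mono' hf.aestronglyMeasurable
    (Eventually.of_forall (fun x => by simpa [Real.norm_eq_abs] using hb x))

/-- setwise convergence implies convergence of integrals of bounded measurable functions -/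
lemma setwise_integral (μ : ℕ → Measure X) (ν : Measure X) [∀ n, IsProbabilityMeasure (μ n)]
    [IsProbabilityMeasure ν]
    (h : ∀ A : Set X, MeasurableSet A →
      Tendsto (fun n => (μ n A).toReal) atTop (𝓝 ((ν A).toReal)))
    {f : X → ℝ} (hf : Measurable f) {M : ℝ} (hb : ∀ x, |f x| ≤ M) :
    Tendsto (fun n => ∫ x, f x ∂(μ n)) atTop (𝓝 (∫ x, f x ∂ν)) := by
  rw [Metric.tendsto_atTop]
  intro ε hε
  set δ : ℝ := ε / 4 with hδdef
  have hδ : 0 < δ := by positivity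
  set J : X → ℤ := fun x => ⌊f x / δ⌋ with hJ
  have hJm : Measurable J := (hf.div_const δ).floor
  set N : ℤ := ⌈M / δ⌉ + 1 with hN
  have hJmem : ∀ x, J x ∈ Finset.Icc (-N) N := by
    intro x
    have h1 : |f x / δ| ≤ M / δ := by
      rw [abs_div, abs_of_pos hδ]
      exact div_le_div_of_nonneg_right (hb x) hδ.le
    have h2 : (J x : ℝ) ≤ f x / δ := Int.floor_le _
    have h3 : f x / δ - 1 < J x := by
      have := Int.lt_floor_add_one (f x / δ); linarith
    have hM : (M / δ : ℝ) ≤ (N : ℝ) := by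
      rw [hN]; push_cast; have := Int.le_ceil (M / δ); linarith
    rw [Finset.mem_Icc]
    constructor
    · have hcast : (-N : ℝ) < (J x : ℝ) + 1 := by
        have := (abs_le.1 h1).1; push_cast; linarith
      have : -N < J x + 1 := by exact_mod_cast hcast
      exact Int.lt_add_one_iff.mp this
    · have : (J x : ℝ) ≤ (N : ℝ) := by
        have := (abs_le.1 h1).2; linarith
      exact_mod_cast this
  set A : ℤ → Set X := fun j => J ⁻¹' {j} with hA
  have hAm : ∀ j, MeasurableSet (A j) := fun j => hJm (measurableSet_singleton j)
  set s : X → ℝ := fun x => ∑ j ∈ Finset.Icc (-N) N, (A j).indicator (fun _ => δ * j) x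
    with hs
  have hs_eq : ∀ x, s x = δ * (J x : ℝ) := by
    intro x
    have h0 : ∀ b ∈ Finset.Icc (-N) N, b ≠ J x →
        (A b).indicator (fun _ => δ * (b : ℝ)) x = 0 := by
      intro b _ hb'
      refine Set.indicator_of_notMem (fun hx => hb' ?_) _
      exact (Set.mem_singleton_iff.1 hx).symm
    calc s x = (A (J x)).indicator (fun _ => δ * ((J x : ℤ) : ℝ)) x :=
          Finset.sum_eq_single_of_mem _ (hJmem x) h0
      _ = δ * (J x : ℝ) := Set.indicator_of_mem (by simp [hA]) _
  have hfs : ∀ x, |f x - s x| ≤ δ := by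
    intro x
    rw [hs_eq x]
    have h2 : (J x : ℝ) ≤ f x / δ := Int.floor_le _
    have h3 : f x / δ < J x + 1 := Int.lt_floor_add_one _
    have e1 : δ * ((J x : ℤ) : ℝ) ≤ δ * (f x / δ) := mul_le_mul_of_nonneg_left h2 hδ.le
    have e2 : δ * (f x / δ) < δ * (((J x : ℤ) : ℝ) + 1) := mul_lt_mul_of_pos_left h3 hδ
    have e3 : δ * (f x / δ) = f x := by field_simp
    have e4 : δ * (((J x : ℤ) : ℝ) + 1) = δ * ((J x : ℤ) : ℝ) + δ := by ring
    rw [abs_le]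
    constructor <;> linarith
  -- integral of s over any probability measure
  have hSint : ∀ (μ' : Measure X) [IsProbabilityMeasure μ'],
      ∫ x, s x ∂μ' = ∑ j ∈ Finset.Icc (-N) N, (μ' (A j)).toReal * (δ * j) := by
    intro μ' _
    simp only [hs]
    rw [integral_finset_sum]
    · refine Finset.sum_congr rfl (fun j _ => ?_)
      rw [integral_indicator (hAm j), setIntegral_const, smul_eq_mul]
      rfl
    · intro j _
      exact (integrable_const _).indicator (hAm j)
  have hSconv : Tendsto (fun n => ∑ j ∈ Finset.Icc (-N) N, ((μ n) (A j)).toReal * (δ * j))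
      atTop (𝓝 (∑ j ∈ Finset.Icc (-N) N, (ν (A j)).toReal * (δ * j))) := by
    refine tendsto_finset_sum _ (fun j _ => ?_)
    exact (h (A j) (hAm j)).mul_const _
  rw [Metric.tendsto_atTop] at hSconv
  obtain ⟨K, hK⟩ := hSconv δ hδ
  refine ⟨K, fun n hn => ?_⟩
  have hsmeas : Measurable s := by
    refine Finset.measurable_sum _ (fun j _ => ?_)
    exact (measurable_const.indicator (hAm j))
  have hsbd : ∀ x, |s x| ≤ M + δ := by
    intro x
    have h1 : s x = (s x - f x) + f x := by ring
    rw [h1]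
    refine le_trans (abs_add_le _ _) ?_
    rw [abs_sub_comm]
    linarith [hfs x, hb x]
  have hdiff : ∀ (μ' : Measure X) [IsProbabilityMeasure μ'],
      |∫ x, f x ∂μ' - ∫ x, s x ∂μ'| ≤ δ := by
    intro μ' _
    rw [← integral_sub (bdd_integrable μ' hf hb) (bdd_integrable μ' hsmeas hsbd)]
    calc |∫ x, (f x - s x) ∂μ'| ≤ ∫ x, |f x - s x| ∂μ' := by
          simpa [Real.norm_eq_abs] using norm_integral_le_integral_norm (fun x => f x - s x) (μ := μ')
      _ ≤ ∫ _x, δ ∂μ' := by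
          refine integral_mono ((bdd_integrable μ' (hf.sub hsmeas)
            (M := M + δ + M) (fun x => ?_)).abs) (integrable_const δ) (fun x => hfs x)
          calc |f x - s x| ≤ |f x| + |s x| := abs_sub _ _
            _ ≤ M + (M + δ) := add_le_add (hb x) (hsbd x)
            _ = M + δ + M := by ring
      _ = δ := by simp
  have e1 := hdiff (μ n)
  have e2 := hdiff ν
  have e3 := hK n hn
  rw [Real.dist_eq] at e3 ⊢
  rw [← hSint (μ n), ← hSint ν] at e3
  have t1 := abs_sub_le (∫ x, f x ∂μ n) (∫ x, s x ∂μ n) (∫ x, f x ∂ν)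
  have t2 := abs_sub_le (∫ x, s x ∂μ n) (∫ x, s x ∂ν) (∫ x, f x ∂ν)
  have t3 : |∫ x, s x ∂ν - ∫ x, f x ∂ν| = |∫ x, f x ∂ν - ∫ x, s x ∂ν| := abs_sub_comm _ _
  have hδε : δ + δ + δ < ε := by rw [hδdef]; linarith
  linarith

/-- Serfozo-type lemma: setwise convergence plus pointwise bounded convergence of integrands. -/
lemma serfozo (μ : ℕ → Measure X) (ν : Measure X) [∀ n, IsProbabilityMeasure (μ n)]
    [IsProbabilityMeasure ν]
    (h : ∀ A : Set X, MeasurableSet A →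
      Tendsto (fun n => (μ n A).toReal) atTop (𝓝 ((ν A).toReal)))
    (g : ℕ → X → ℝ) (g' : X → ℝ) (hgm : ∀ n, Measurable (g n)) (hg'm : Measurable g')
    (M : ℝ) (hM0 : 0 ≤ M) (hbd : ∀ n x, |g n x| ≤ M) (hb' : ∀ x, |g' x| ≤ M)
    (hpt : ∀ x, Tendsto (fun n => g n x) atTop (𝓝 (g' x))) :
    Tendsto (fun n => ∫ x, g n x ∂(μ n)) atTop (𝓝 (∫ x, g' x ∂ν)) := by
  set ψ : ℕ → X → ℝ := fun m x => ⨆ n : ℕ, |g (m + n) x - g' x| with hψ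
  have hbdd : ∀ m x, BddAbove (Set.range fun n : ℕ => |g (m + n) x - g' x|) := by
    intro m x
    refine ⟨2 * M, ?_⟩
    rintro r ⟨n, rfl⟩
    calc |g (m + n) x - g' x| ≤ |g (m + n) x| + |g' x| := abs_sub _ _
      _ ≤ 2 * M := by linarith [hbd (m + n) x, hb' x]
  have hψm : ∀ m, Measurable (ψ m) := by
    intro m
    exact Measurable.iSup (fun n => ((hgm (m + n)).sub hg'm).abs)
  have hψnonneg : ∀ m x, 0 ≤ ψ m x := by
    intro m x
    exact le_trans (abs_nonneg _) (le_ciSup (hbdd m x) 0)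
  have hψbd : ∀ m x, |ψ m x| ≤ 2 * M := by
    intro m x
    rw [abs_of_nonneg (hψnonneg m x)]
    refine ciSup_le (fun n => ?_)
    calc |g (m + n) x - g' x| ≤ |g (m + n) x| + |g' x| := abs_sub _ _
      _ ≤ 2 * M := by linarith [hbd (m + n) x, hb' x]
  have hψle : ∀ m n x, m ≤ n → |g n x - g' x| ≤ ψ m x := by
    intro m n x hmn
    have : n = m + (n - m) := (Nat.add_sub_cancel' hmn).symm
    rw [this]
    exact le_ciSup (hbdd m x) (n - m)
  -- ψ m x → 0 pointwise as m → ∞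
  have hψ0 : ∀ x, Tendsto (fun m => ψ m x) atTop (𝓝 0) := by
    intro x
    rw [Metric.tendsto_atTop]
    intro ε hε
    have := (Metric.tendsto_atTop.1 (hpt x)) (ε / 2) (by positivity)
    obtain ⟨K, hK⟩ := this
    refine ⟨K, fun m hm => ?_⟩
    rw [Real.dist_eq, sub_zero, abs_of_nonneg (hψnonneg m x)]
    have : ψ m x ≤ ε / 2 := by
      refine ciSup_le (fun n => ?_)
      have := hK (m + n) (le_trans hm (Nat.le_add_right m n))
      rw [Real.dist_eq] at this
      exact this.le
    linarith
  -- ∫ ψ m dν → 0 by dominated convergence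
  have hψint : Tendsto (fun m => ∫ x, ψ m x ∂ν) atTop (𝓝 0) := by
    have h0 : (0 : ℝ) = ∫ _x, (0 : ℝ) ∂ν := by simp
    rw [h0]
    refine tendsto_integral_of_dominated_convergence (fun _ => 2 * M)
      (fun m => (hψm m).aestronglyMeasurable) (integrable_const _)
      (fun m => Eventually.of_forall (fun x => by
        simpa [Real.norm_eq_abs] using hψbd m x))
      (Eventually.of_forall (fun x => hψ0 x))
  rw [Metric.tendsto_atTop]
  intro ε hε
  obtain ⟨m, hm⟩ := (Metric.tendsto_atTop.1 hψint) (ε / 4) (by positivity)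
  have hm' := hm m le_rfl
  rw [Real.dist_eq, sub_zero] at hm'
  have hψνsmall : ∫ x, ψ m x ∂ν < ε / 4 := lt_of_abs_lt hm'
  -- ∫ ψ m dμ n → ∫ ψ m dν
  have h1 := setwise_integral μ ν h (hψm m) (hψbd m)
  obtain ⟨K1, hK1⟩ := (Metric.tendsto_atTop.1 h1) (ε / 4) (by positivity)
  -- ∫ g' dμ n → ∫ g' dν
  have h2 := setwise_integral μ ν h hg'm hb'
  obtain ⟨K2, hK2⟩ := (Metric.tendsto_atTop.1 h2) (ε / 4) (by positivity)
  refine ⟨max m (max K1 K2), fun n hn => ?_⟩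
  have hnm : m ≤ n := le_trans (le_max_left _ _) hn
  have hnK1 : K1 ≤ n := le_trans (le_trans (le_max_left _ _) (le_max_right _ _)) hn
  have hnK2 : K2 ≤ n := le_trans (le_trans (le_max_right _ _) (le_max_right _ _)) hn
  have e1 : |∫ x, g n x ∂(μ n) - ∫ x, g' x ∂(μ n)| ≤ ∫ x, ψ m x ∂(μ n) := by
    rw [← integral_sub (bdd_integrable _ (hgm n) (hbd n)) (bdd_integrable _ hg'm hb')]
    calc |∫ x, (g n x - g' x) ∂(μ n)| ≤ ∫ x, |g n x - g' x| ∂(μ n) := by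
          simpa [Real.norm_eq_abs] using
            norm_integral_le_integral_norm (fun x => g n x - g' x) (μ := μ n)
      _ ≤ ∫ x, ψ m x ∂(μ n) := by
          refine integral_mono ((bdd_integrable _ ((hgm n).sub hg'm)
            (M := 2 * M) (fun x => ?_)).abs) (bdd_integrable _ (hψm m) (hψbd m))
            (fun x => hψle m n x hnm)
          calc |g n x - g' x| ≤ |g n x| + |g' x| := abs_sub _ _
            _ ≤ 2 * M := by linarith [hbd n x, hb' x]
  have e2 := hK1 n hnK1
  have e3 := hK2 n hnK2
  rw [Real.dist_eq] at e2 e3 ⊢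
  have e4 : ∫ x, ψ m x ∂(μ n) < ε / 2 := by
    have := abs_sub_le (∫ x, ψ m x ∂(μ n)) (∫ x, ψ m x ∂ν) 0
    have h5 : |∫ x, ψ m x ∂(μ n)| < ε / 4 + ε / 4 := by
      calc |∫ x, ψ m x ∂(μ n)| = |(∫ x, ψ m x ∂(μ n) - ∫ x, ψ m x ∂ν) + ∫ x, ψ m x ∂ν| := by
            ring_nf
        _ ≤ |∫ x, ψ m x ∂(μ n) - ∫ x, ψ m x ∂ν| + |∫ x, ψ m x ∂ν| := abs_add_le _ _
        _ < ε / 4 + ε / 4 := add_lt_add e2 hm'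
    calc ∫ x, ψ m x ∂(μ n) ≤ |∫ x, ψ m x ∂(μ n)| := le_abs_self _
      _ < ε / 4 + ε / 4 := h5
      _ = ε / 2 := by ring
  calc |∫ x, g n x ∂(μ n) - ∫ x, g' x ∂ν|
      ≤ |∫ x, g n x ∂(μ n) - ∫ x, g' x ∂(μ n)| + |∫ x, g' x ∂(μ n) - ∫ x, g' x ∂ν| :=
        abs_sub_le _ _ _
    _ < ε / 2 + ε / 4 := add_lt_add_of_le_of_lt (le_trans e1 e4.le) e3
    _ < ε := by linarith

end Aux

section Aux2

variable {X : Type*} [MeasurableSpace X]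

lemma abs_integral_le_of_bdd (μ : Measure X) [IsProbabilityMeasure μ] {f : X → ℝ}
    (hf : Measurable f) {M : ℝ} (hb : ∀ x, |f x| ≤ M) : |∫ x, f x ∂μ| ≤ M := by
  calc |∫ x, f x ∂μ| ≤ ∫ x, |f x| ∂μ := by
        simpa [Real.norm_eq_abs] using norm_integral_le_integral_norm f (μ := μ)
    _ ≤ ∫ _x, M ∂μ := integral_mono (bdd_integrable μ hf hb).abs (integrable_const M)
        (fun x => hb x)
    _ = M := by simp

lemma integral_comp_bdd (η κ : Kernel X X) [IsMarkovKernel η] [IsMarkovKernel κ] (x : X)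
    {f : X → ℝ} (hf : Measurable f) {M : ℝ} (hb : ∀ y, |f y| ≤ M) :
    ∫ z, f z ∂((η ∘ₖ κ) x) = ∫ y, ∫ z, f z ∂(η y) ∂(κ x) := by
  have hint : Integrable (fun p : X × X => f p.2) ((κ ⊗ₖ Kernel.prodMkLeft X η) x) :=
    bdd_integrable _ (hf.comp measurable_snd) (fun p => hb p.2)
  rw [Kernel.comp_eq_snd_compProd, Kernel.snd_apply,
    integral_map measurable_snd.aemeasurable hf.aestronglyMeasurable,
    ProbabilityTheory.integral_compProd hint]
  simp [Kernel.prodMkLeft_apply]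

instance iterKer_markov (P : Kernel X X) [IsMarkovKernel P] (k : ℕ) :
    IsMarkovKernel (iterKer P k) := by
  induction k with
  | zero => rw [iterKer]; infer_instance
  | succ k ih => rw [iterKer]; infer_instance

lemma measurable_kernel_integral (κ : Kernel X X) [IsMarkovKernel κ] {f : X → ℝ}
    (hf : Measurable f) : Measurable fun x => ∫ y, f y ∂(κ x) := by
  have h : StronglyMeasurable (Function.uncurry (fun (_ : X) (y : X) => f y)) :=
    (hf.comp measurable_snd).stronglyMeasurable
  exact (MeasureTheory.StronglyMeasurable.integral_kernel_prod_right (κ := κ) h).measurable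

lemma key_conv (P : Kernel X X) (Pn : ℕ → Kernel X X) [IsMarkovKernel P]
    [∀ n, IsMarkovKernel (Pn n)]
    (hconv : ∀ (x : X) (A : Set X), MeasurableSet A →
      Tendsto (fun n => ((Pn n) x A).toReal) atTop (𝓝 ((P x A).toReal))) :
    ∀ (k : ℕ) (f : X → ℝ), Measurable f → ∀ M : ℝ, 0 ≤ M → (∀ x, |f x| ≤ M) → ∀ x,
      Tendsto (fun n => ∫ y, f y ∂(iterKer (Pn n) k x)) atTop
        (𝓝 (∫ y, f y ∂(iterKer P k x))) := by
  intro k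
  induction k with
  | zero =>
    intro f hf M _ _ x
    have h1 : ∀ (Q : Kernel X X), ∫ y, f y ∂(iterKer Q 0 x) = f x := by
      intro Q
      show ∫ y, f y ∂(Kernel.id x) = f x
      rw [Kernel.id_apply]
      exact integral_dirac' f x hf.stronglyMeasurable
    simp only [h1]
    exact tendsto_const_nhds
  | succ k ih =>
    intro f hf M hM0 hb x
    have h1 : ∀ (Q : Kernel X X) (_ : IsMarkovKernel Q),
        ∫ y, f y ∂(iterKer Q (k + 1) x) = ∫ y, ∫ z, f z ∂(iterKer Q k y) ∂(Q x) := by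
      intro Q hQ
      show ∫ y, f y ∂((iterKer Q k ∘ₖ Q) x) = _
      exact integral_comp_bdd _ _ x hf hb
    simp only [fun n => h1 (Pn n) inferInstance, h1 P inferInstance]
    refine serfozo (fun n => Pn n x) (P x) (hconv x)
      (fun n y => ∫ z, f z ∂(iterKer (Pn n) k y)) (fun y => ∫ z, f z ∂(iterKer P k y))
      (fun n => measurable_kernel_integral _ hf) (measurable_kernel_integral _ hf)
      M hM0 (fun n y => abs_integral_le_of_bdd _ hf hb)
      (fun y => abs_integral_le_of_bdd _ hf hb)
      (fun y => ih f hf M hM0 hb y)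

end Aux2

/-- If `Pₙ(x,A) → P(x,A)` setwise and both `P` and all `Pₙ` are uniformly geometrically
ergodic with common constants `C, ρ` towards their invariant distributions `π`, `πₙ`,
then `πₙ(f) → π(f)` for every bounded measurable `f`. -/
theorem stmt2 {X : Type*} [MeasurableSpace X]
    (P : Kernel X X) (Pn : ℕ → Kernel X X)
    [IsMarkovKernel P] [∀ n, IsMarkovKernel (Pn n)]
    (π : Measure X) (πn : ℕ → Measure X)
    [IsProbabilityMeasure π] [∀ n, IsProbabilityMeasure (πn n)]
    (hπinv : π.bind (fun x => P x) = π)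
    (hπninv : ∀ n, (πn n).bind (fun x => Pn n x) = πn n)
    (hconv : ∀ (x : X) (A : Set X), MeasurableSet A →
      Tendsto (fun n => ((Pn n) x A).toReal) atTop (𝓝 ((P x A).toReal)))
    (C ρ : ℝ) (hρ : ρ ∈ Set.Ioo (0 : ℝ) 1)
    (hP : ∀ (k : ℕ) (f : X → ℝ), Measurable f → (∀ x, |f x| ≤ 1) →
      ∀ x, |(∫ y, f y ∂(iterKer P k x)) - ∫ y, f y ∂π| ≤ C * ρ ^ k)
    (hPn : ∀ (n k : ℕ) (f : X → ℝ), Measurable f → (∀ x, |f x| ≤ 1) →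
      ∀ x, |(∫ y, f y ∂(iterKer (Pn n) k x)) - ∫ y, f y ∂(πn n)| ≤ C * ρ ^ k) :
    ∀ (f : X → ℝ), Measurable f → (∃ M, ∀ x, |f x| ≤ M) →
      Tendsto (fun n => ∫ x, f x ∂(πn n)) atTop (𝓝 (∫ x, f x ∂π)) := by
  intro f hf hMex
  obtain ⟨M, hM⟩ := hMex
  -- X is nonempty since it carries a probability measure
  have hne : Nonempty X := by
    by_contra hempty
    rw [not_nonempty_iff] at hempty
    have h1 : π Set.univ = 1 := measure_univ
    rw [Set.univ_eq_empty_iff.mpr hempty] at h1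
    simp at h1
  obtain ⟨x₀⟩ := hne
  set M' : ℝ := max M 1 with hM'
  have hM'pos : 0 < M' := lt_of_lt_of_le one_pos (le_max_right _ _)
  have hbM' : ∀ x, |f x| ≤ M' := fun x => le_trans (hM x) (le_max_left _ _)
  set f' : X → ℝ := fun x => f x / M' with hf'
  have hf'm : Measurable f' := hf.div_const M'
  have hf'b : ∀ x, |f' x| ≤ 1 := by
    intro x
    rw [hf']
    simp only
    rw [abs_div, abs_of_pos hM'pos, div_le_one hM'pos]
    exact hbM' x
  have hint : ∀ (μ : Measure X) [IsProbabilityMeasure μ],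
      ∫ x, f' x ∂μ = (∫ x, f x ∂μ) / M' := by
    intro μ _
    rw [hf']
    simp only
    rw [integral_div]
  -- the geometric bounds for f
  have hPf : ∀ (k : ℕ) (x : X),
      |(∫ y, f y ∂(iterKer P k x)) - ∫ y, f y ∂π| ≤ M' * (C * ρ ^ k) := by
    intro k x
    have := hP k f' hf'm hf'b x
    rw [hint (iterKer P k x), hint π, div_sub_div_same, abs_div, abs_of_pos hM'pos,
      div_le_iff₀ hM'pos] at this
    linarith [this]
  have hPnf : ∀ (n k : ℕ) (x : X),
      |(∫ y, f y ∂(iterKer (Pn n) k x)) - ∫ y, f y ∂(πn n)| ≤ M' * (C * ρ ^ k) := by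
    intro n k x
    have := hPn n k f' hf'm hf'b x
    rw [hint (iterKer (Pn n) k x), hint (πn n), div_sub_div_same, abs_div,
      abs_of_pos hM'pos, div_le_iff₀ hM'pos] at this
    linarith [this]
  rw [Metric.tendsto_atTop]
  intro ε hε
  -- pick k such that M' * (C * ρ ^ k) < ε / 3
  have hCk : ∀ k, 0 ≤ C * ρ ^ k := by
    intro k
    have := hP k (fun _ => 1) measurable_const (fun _ => by norm_num) x₀
    simpa using le_trans (abs_nonneg _) this
  have hρ0 : (0 : ℝ) ≤ ρ := hρ.1.le
  have hρ1 : ρ < 1 := hρ.2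
  have htend : Tendsto (fun k => M' * (C * ρ ^ k)) atTop (𝓝 0) := by
    have h1 : Tendsto (fun k : ℕ => ρ ^ k) atTop (𝓝 0) :=
      tendsto_pow_atTop_nhds_zero_of_lt_one hρ0 hρ1
    have h2 : Tendsto (fun k : ℕ => M' * (C * ρ ^ k)) atTop (𝓝 (M' * (C * 0))) :=
      (h1.const_mul C).const_mul M'
    simpa using h2
  obtain ⟨k, hk⟩ := (Metric.tendsto_atTop.1 htend) (ε / 3) (by positivity)
  have hkk := hk k le_rfl
  rw [Real.dist_eq, sub_zero] at hkk
  have hgeo : M' * (C * ρ ^ k) < ε / 3 := lt_of_abs_lt hkk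
  -- convergence of k-step kernels at x₀
  have hkey := key_conv P Pn hconv k f hf M' hM'pos.le hbM' x₀
  obtain ⟨K, hK⟩ := (Metric.tendsto_atTop.1 hkey) (ε / 3) (by positivity)
  refine ⟨K, fun n hn => ?_⟩
  have e1 := hPnf n k x₀
  have e2 := hPf k x₀
  have e3 := hK n hn
  rw [Real.dist_eq] at e3 ⊢
  have t1 := abs_sub_le (∫ x, f x ∂(πn n)) (∫ y, f y ∂(iterKer (Pn n) k x₀)) (∫ x, f x ∂π)
  have t2 := abs_sub_le (∫ y, f y ∂(iterKer (Pn n) k x₀)) (∫ y, f y ∂(iterKer P k x₀))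
    (∫ x, f x ∂π)
  have e1' : |∫ x, f x ∂(πn n) - ∫ y, f y ∂(iterKer (Pn n) k x₀)| ≤ M' * (C * ρ ^ k) := by
    rw [abs_sub_comm]; exact e1
  calc |∫ x, f x ∂(πn n) - ∫ x, f x ∂π| ≤ _ := t1
    _ < ε := by linarith
end

section
/- Let (X_k)_{k≥1} be a process on X with transition kernels K_{k−1} satisfying the uniform minorization K_{k−1}(x, D) ≥ δ for all x and all k, where δ > 0 and D is a fixed measurable set. Then for any ε ∈ (0, δ), E[ n / max(1, Σ_{k=1}^n 1_D(X_k)) ] ≤ 1/(δ−ε) + n·exp(−nε²/2); in particular sup_n E[ n / max(1, Σ_{k=1}^n 1_D(X_k)) ] < ∞. -/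
open MeasureTheory ProbabilityTheory Filter Topology


lemma stmt7_exp_quad {x : ℝ} (hx : 0 ≤ x) : Real.exp (-x) ≤ 1 - x + x ^ 2 / 2 := by
  have hd : ∀ y : ℝ, HasDerivAt (fun y : ℝ => 1 - y + y ^ 2 / 2 - Real.exp (-y))
      (-1 + y + Real.exp (-y)) y := by
    intro y
    have h1 : HasDerivAt (fun y : ℝ => Real.exp (-y)) (Real.exp (-y) * (-1)) y :=
      (Real.hasDerivAt_exp (-y)).comp y ((hasDerivAt_id y).neg)
    have h2 : HasDerivAt (fun y : ℝ => 1 - y + y ^ 2 / 2)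
        (0 - 1 + (↑2 * y ^ (2 - 1)) / 2) y :=
      (((hasDerivAt_const y (1:ℝ)).sub (hasDerivAt_id y)).add ((hasDerivAt_pow 2 y).div_const 2))
    have := h2.sub h1
    refine this.congr_deriv ?_
    push_cast
    ring
  have hmono : Monotone (fun y : ℝ => 1 - y + y ^ 2 / 2 - Real.exp (-y)) := by
    apply monotone_of_hasDerivAt_nonneg hd
    intro y
    have := Real.add_one_le_exp (-y)
    simp only [Pi.zero_apply]
    linarith
  have h0 := hmono hx
  simp only [Real.exp_zero] at h0
  norm_num at h0
  linarith

lemma stmt7_prod_bound {Ω S : Type*} {m : MeasurableSpace Ω} [MeasurableSpace S]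
    {μ : Measure Ω} [IsProbabilityMeasure μ]
    (𝒻 : Filtration ℕ m) (X : ℕ → Ω → S) (hX : ∀ k, Measurable[𝒻 k] (X k))
    (K : ℕ → Kernel S S) [∀ k, IsMarkovKernel (K k)]
    (hK : ∀ (k : ℕ) (A : Set S), MeasurableSet A →
      (μ[fun ω => Set.indicator A (fun _ => (1 : ℝ)) (X (k + 1) ω) | 𝒻 k]
        =ᵐ[μ] fun ω => ((K k) (X k ω) A).toReal))
    (D : Set S) (hD : MeasurableSet D)
    (δ : ℝ) (hmin : ∀ k x, δ ≤ ((K k) x D).toReal)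
    (c : ℝ) (hc0 : 0 ≤ c) (hc1 : c ≤ 1) (hcδ : c * δ ≤ 1) (hδ0 : 0 ≤ δ) :
    ∀ n : ℕ,
      ∫ ω, ∏ k ∈ Finset.Icc 1 n, (1 - c * Set.indicator D (fun _ => (1:ℝ)) (X k ω)) ∂μ
        ≤ (1 - c * δ) ^ n := by
  set Ind : ℕ → Ω → ℝ := fun k ω => Set.indicator D (fun _ => (1:ℝ)) (X k ω) with hInd
  have hI01 : ∀ k ω, Ind k ω = 0 ∨ Ind k ω = 1 := by
    intro k ω
    by_cases h : X k ω ∈ D <;> simp [hInd, Set.indicator_apply, h]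
  have hI0 : ∀ k ω, 0 ≤ Ind k ω := fun k ω => by rcases hI01 k ω with h | h <;> simp [h]
  have hI1 : ∀ k ω, Ind k ω ≤ 1 := fun k ω => by rcases hI01 k ω with h | h <;> simp [h]
  have hIm : ∀ k, Measurable[𝒻 k] (Ind k) := by
    intro k
    have : Ind k = fun ω => ((X k) ⁻¹' D).indicator (fun _ => (1:ℝ)) ω := by
      funext ω; by_cases h : X k ω ∈ D <;> simp [hInd, Set.indicator_apply, h]
    rw [this]
    exact measurable_const.indicator ((hX k) hD)
  set W : ℕ → Ω → ℝ := fun n ω => ∏ k ∈ Finset.Icc 1 n, (1 - c * Ind k ω) with hW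
  have hfac0 : ∀ k ω, 0 ≤ 1 - c * Ind k ω := by
    intro k ω
    have := hI1 k ω
    nlinarith [hI0 k ω]
  have hfac1 : ∀ k ω, 1 - c * Ind k ω ≤ 1 := by
    intro k ω
    nlinarith [hI0 k ω]
  have hW0 : ∀ n ω, 0 ≤ W n ω := fun n ω => Finset.prod_nonneg fun k _ => hfac0 k ω
  have hW1 : ∀ n ω, W n ω ≤ 1 := fun n ω =>
    Finset.prod_le_one (fun k _ => hfac0 k ω) (fun k _ => hfac1 k ω)
  have hWm : ∀ n, Measurable[𝒻 n] (W n) := by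
    intro n
    apply Finset.measurable_prod
    intro k hk
    have hk' : k ≤ n := (Finset.mem_Icc.mp hk).2
    exact measurable_const.sub
      (measurable_const.mul ((hIm k).mono (𝒻.mono hk') le_rfl))
  have hbdd_int : ∀ f : Ω → ℝ, Measurable f → (∀ ω, |f ω| ≤ 1) → Integrable f μ := by
    intro f hf hb
    exact (integrable_const (1:ℝ)).mono' hf.aestronglyMeasurable
      (ae_of_all _ fun ω => by rw [Real.norm_eq_abs]; exact hb ω)
  have hWint : ∀ n, Integrable (W n) μ := fun n =>
    hbdd_int _ ((hWm n).mono (𝒻.le n) le_rfl)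
      (fun ω => abs_le.mpr ⟨by linarith [hW0 n ω], hW1 n ω⟩)
  intro n
  induction n with
  | zero => simp
  | succ n ih =>
    have hIint : Integrable (Ind (n+1)) μ :=
      hbdd_int _ ((hIm (n+1)).mono (𝒻.le (n+1)) le_rfl)
        (fun ω => abs_le.mpr ⟨by linarith [hI0 (n+1) ω], hI1 (n+1) ω⟩)
    have hWIint : Integrable (W n * Ind (n+1)) μ := by
      apply hbdd_int _ (((hWm n).mono (𝒻.le n) le_rfl).mul
        ((hIm (n+1)).mono (𝒻.le (n+1)) le_rfl))
      intro ω
      simp only [Pi.mul_apply, abs_mul]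
      calc |W n ω| * |Ind (n+1) ω| ≤ 1 * 1 := by
            apply mul_le_mul _ _ (abs_nonneg _) zero_le_one
            · exact abs_le.mpr ⟨by linarith [hW0 n ω], hW1 n ω⟩
            · exact abs_le.mpr ⟨by linarith [hI0 (n+1) ω], hI1 (n+1) ω⟩
        _ = 1 := one_mul 1
    have hKmeas : Measurable (fun ω => ((K n) (X n ω) D).toReal) :=
      ((Kernel.measurable_coe (K n) hD).comp ((hX n).mono (𝒻.le n) le_rfl)).ennreal_toReal
    have hK1 : ∀ ω, ((K n) (X n ω) D).toReal ≤ 1 := by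
      intro ω
      have h := prob_le_one (μ := (K n) (X n ω)) (s := D)
      exact ENNReal.toReal_le_of_le_ofReal zero_le_one (by simpa using h)
    have hWKint : Integrable (fun ω => W n ω * ((K n) (X n ω) D).toReal) μ := by
      apply hbdd_int _ (((hWm n).mono (𝒻.le n) le_rfl).mul hKmeas)
      intro ω
      rw [Pi.mul_apply, abs_mul]
      calc |W n ω| * |((K n) (X n ω) D).toReal| ≤ 1 * 1 := by
            apply mul_le_mul _ _ (abs_nonneg _) zero_le_one
            · exact abs_le.mpr ⟨by linarith [hW0 n ω], hW1 n ω⟩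
            · exact abs_le.mpr ⟨le_trans (by norm_num) ENNReal.toReal_nonneg, hK1 ω⟩
        _ = 1 := one_mul 1
    -- key tower-property identity
    have key : ∫ ω, W n ω * Ind (n+1) ω ∂μ
        = ∫ ω, W n ω * ((K n) (X n ω) D).toReal ∂μ := by
      have h2 : μ[W n * Ind (n+1) | 𝒻 n] =ᵐ[μ] W n * μ[Ind (n+1) | 𝒻 n] :=
        condExp_mul_of_stronglyMeasurable_left (hWm n).stronglyMeasurable hWIint hIint
      have h3 : μ[Ind (n+1) | 𝒻 n] =ᵐ[μ] fun ω => ((K n) (X n ω) D).toReal := hK n D hD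
      calc ∫ ω, W n ω * Ind (n+1) ω ∂μ
          = ∫ ω, (μ[W n * Ind (n+1) | 𝒻 n]) ω ∂μ := (integral_condExp (𝒻.le n)).symm
        _ = ∫ ω, W n ω * ((K n) (X n ω) D).toReal ∂μ := by
            apply integral_congr_ae
            filter_upwards [h2, h3] with ω h2ω h3ω
            rw [h2ω, Pi.mul_apply, h3ω]
    have hge : δ * ∫ ω, W n ω ∂μ ≤ ∫ ω, W n ω * Ind (n+1) ω ∂μ := by
      rw [key, ← integral_const_mul]
      apply integral_mono ((hWint n).const_mul δ) hWKint
      intro ω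
      calc δ * W n ω = W n ω * δ := mul_comm _ _
        _ ≤ W n ω * ((K n) (X n ω) D).toReal :=
            mul_le_mul_of_nonneg_left (hmin n (X n ω)) (hW0 n ω)
    have hsplit : W (n+1) = fun ω => W n ω - c * (W n ω * Ind (n+1) ω) := by
      funext ω
      show ∏ k ∈ Finset.Icc 1 (n+1), (1 - c * Ind k ω) = _
      rw [Finset.prod_Icc_succ_top (Nat.le_add_left 1 n)]
      show W n ω * (1 - c * Ind (n+1) ω) = _
      ring
    have hWn0 : 0 ≤ ∫ ω, W n ω ∂μ := integral_nonneg fun ω => hW0 n ω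
    calc ∫ ω, W (n+1) ω ∂μ
        = ∫ ω, (W n ω - c * (W n ω * Ind (n+1) ω)) ∂μ := by rw [hsplit]
      _ = (∫ ω, W n ω ∂μ) - c * ∫ ω, W n ω * Ind (n+1) ω ∂μ := by
          have hgint : Integrable (fun ω => W n ω * Ind (n+1) ω) μ := hWIint
          rw [integral_sub (hWint n) (hgint.const_mul c), integral_const_mul]
      _ ≤ (∫ ω, W n ω ∂μ) - c * (δ * ∫ ω, W n ω ∂μ) := by
          have := mul_le_mul_of_nonneg_left hge hc0
          linarith
      _ = (1 - c * δ) * ∫ ω, W n ω ∂μ := by ring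
      _ ≤ (1 - c * δ) * (1 - c * δ) ^ n :=
          mul_le_mul_of_nonneg_left ih (by linarith)
      _ = (1 - c * δ) ^ (n+1) := by ring


set_option maxHeartbeats 1000000 in
/-- If the chain `(X_k)` has transition kernels satisfying the uniform minorization
`K_{k}(x, D) ≥ δ`, then for any `ε ∈ (0, δ)`,
`E[n / max(1, ∑_{k=1}^n 1_D(X_k))] ≤ 1/(δ-ε) + n·exp(-nε²/2)`; in particular this
expectation is bounded uniformly in `n`. -/
theorem stmt7 {Ω S : Type*} {m : MeasurableSpace Ω} [MeasurableSpace S]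
    {μ : Measure Ω} [IsProbabilityMeasure μ]
    (𝒻 : Filtration ℕ m) (X : ℕ → Ω → S) (hX : ∀ k, Measurable[𝒻 k] (X k))
    (K : ℕ → Kernel S S) [∀ k, IsMarkovKernel (K k)]
    (hK : ∀ (k : ℕ) (A : Set S), MeasurableSet A →
      (μ[fun ω => Set.indicator A (fun _ => (1 : ℝ)) (X (k + 1) ω) | 𝒻 k]
        =ᵐ[μ] fun ω => ((K k) (X k ω) A).toReal))
    (D : Set S) (hD : MeasurableSet D)
    (δ : ℝ) (hδ : 0 < δ)
    (hmin : ∀ k x, δ ≤ ((K k) x D).toReal)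
    (ε : ℝ) (hε : ε ∈ Set.Ioo 0 δ) :
    (∀ n : ℕ,
      (∫ ω, (n : ℝ) /
          max 1 (∑ k ∈ Finset.Icc 1 n, Set.indicator D (fun _ => (1 : ℝ)) (X k ω)) ∂μ) ≤
        1 / (δ - ε) + (n : ℝ) * Real.exp (-(n : ℝ) * ε ^ 2 / 2)) ∧
    ∃ B : ℝ, ∀ n : ℕ,
      (∫ ω, (n : ℝ) /
          max 1 (∑ k ∈ Finset.Icc 1 n, Set.indicator D (fun _ => (1 : ℝ)) (X k ω)) ∂μ) ≤ B := by
  obtain ⟨hε0, hεδ⟩ := hε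
  have hδε : 0 < δ - ε := sub_pos.mpr hεδ
  set Ind : ℕ → Ω → ℝ := fun k ω => Set.indicator D (fun _ => (1:ℝ)) (X k ω) with hInd
  have hI01 : ∀ k ω, Ind k ω = 0 ∨ Ind k ω = 1 := by
    intro k ω
    by_cases h : X k ω ∈ D <;> simp [hInd, Set.indicator_apply, h]
  have hI0 : ∀ k ω, 0 ≤ Ind k ω := fun k ω => by rcases hI01 k ω with h | h <;> simp [h]
  have hImM : ∀ k, Measurable (Ind k) := by
    intro k
    have heq : Ind k = fun ω => ((X k) ⁻¹' D).indicator (fun _ => (1:ℝ)) ω := by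
      funext ω; by_cases h : X k ω ∈ D <;> simp [hInd, Set.indicator_apply, h]
    rw [heq]
    exact measurable_const.indicator (((hX k).mono (𝒻.le k) le_rfl) hD)
  set Sn : ℕ → Ω → ℝ := fun n ω => ∑ k ∈ Finset.Icc 1 n, Ind k ω with hSn
  have hSm : ∀ n, Measurable (Sn n) := fun n => Finset.measurable_sum _ (fun k _ => hImM k)
  have hS0 : ∀ n ω, 0 ≤ Sn n ω := fun n ω => Finset.sum_nonneg fun k _ => hI0 k ω
  -- δ ≤ 1
  have hδ1 : δ ≤ 1 := by
    have hne : (Set.univ : Set Ω).Nonempty := by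
      apply MeasureTheory.nonempty_of_measure_ne_zero (μ := μ); simp
    obtain ⟨ω, -⟩ := hne
    have h1 := hmin 0 (X 0 ω)
    have h2 : ((K 0) (X 0 ω) D).toReal ≤ 1 :=
      ENNReal.toReal_le_of_le_ofReal zero_le_one
        (by simpa using prob_le_one (μ := (K 0) (X 0 ω)) (s := D))
    linarith
  set l : ℝ := ε / δ with hl
  have hl0 : 0 < l := div_pos hε0 hδ
  have hl1 : l < 1 := (div_lt_one hδ).mpr hεδ
  set c : ℝ := 1 - Real.exp (-l) with hc
  have hexp_le1 : Real.exp (-l) ≤ 1 := by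
    rw [← Real.exp_zero]; exact Real.exp_le_exp.mpr (by linarith)
  have hc0 : 0 ≤ c := by rw [hc]; linarith
  have hc1 : c ≤ 1 := by have := Real.exp_pos (-l); rw [hc]; linarith
  have hcδ : c * δ ≤ 1 := by nlinarith
  have hquad : l - l^2/2 ≤ c := by
    have := stmt7_exp_quad hl0.le
    rw [hc]; linarith
  have hexp_key : l * (δ - ε) - c * δ ≤ -(ε^2/2) := by
    have hlδ : l * δ = ε := div_mul_cancel₀ ε hδ.ne'
    have hl2 : l^2 * δ = ε^2/δ := by rw [hl]; field_simp
    have h2 : ε - (ε^2/δ)/2 ≤ c * δ := by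
      have := mul_le_mul_of_nonneg_right hquad hδ.le
      nlinarith
    have h3 : ε^2/2 ≤ (ε^2/δ)/2 := by
      have : ε^2 ≤ ε^2/δ := by
        rw [le_div_iff₀ hδ]; nlinarith [sq_nonneg ε]
      linarith
    have h4 : l * ε = ε^2/δ := by rw [hl]; field_simp
    nlinarith
  -- tail bound
  have htail : ∀ n : ℕ,
      (μ {ω | Sn n ω ≤ (n:ℝ) * (δ - ε)}).toReal ≤ Real.exp (-(n:ℝ) * ε^2 / 2) := by
    intro n
    set A := {ω | Sn n ω ≤ (n:ℝ) * (δ - ε)} with hA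
    have hAm : MeasurableSet A := measurableSet_le (hSm n) measurable_const
    set P : Ω → ℝ := fun ω => ∏ k ∈ Finset.Icc 1 n, (1 - c * Ind k ω) with hP
    have hfac0 : ∀ k ω, 0 ≤ 1 - c * Ind k ω := by
      intro k ω
      rcases hI01 k ω with h | h <;> simp [h] <;> linarith
    have hP0 : ∀ ω, 0 ≤ P ω := fun ω => Finset.prod_nonneg fun k _ => hfac0 k ω
    have hP1 : ∀ ω, P ω ≤ 1 := fun ω => Finset.prod_le_one (fun k _ => hfac0 k ω)
      (fun k _ => by rcases hI01 k ω with h | h <;> simp [h] <;> linarith)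
    have hPm : Measurable P := Finset.measurable_prod _ fun k _ =>
      measurable_const.sub (measurable_const.mul (hImM k))
    have hPint : Integrable P μ := (integrable_const (1:ℝ)).mono' hPm.aestronglyMeasurable
      (ae_of_all _ fun ω => by
        rw [Real.norm_eq_abs]; exact abs_le.mpr ⟨by linarith [hP0 ω], hP1 ω⟩)
    have hWeq : ∀ ω, P ω = Real.exp (-(l * Sn n ω)) := by
      intro ω
      have hsum : -(l * Sn n ω) = ∑ k ∈ Finset.Icc 1 n, (-(l * Ind k ω)) := by
        rw [hSn]; rw [Finset.mul_sum]; rw [← Finset.sum_neg_distrib]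
      rw [hsum, Real.exp_sum, hP]
      apply Finset.prod_congr rfl
      intro k _
      rcases hI01 k ω with h | h
      · simp [h]
      · rw [h, hc]; simp
    have hPB := stmt7_prod_bound 𝒻 X hX K hK D hD δ hmin c hc0 hc1 hcδ hδ.le n
    have step1 : Real.exp (-(l * ((n:ℝ)*(δ-ε)))) * (μ A).toReal ≤ (1 - c*δ)^n := by
      calc Real.exp (-(l * ((n:ℝ)*(δ-ε)))) * (μ A).toReal
          = ∫ _ω in A, Real.exp (-(l * ((n:ℝ)*(δ-ε)))) ∂μ := by
            rw [setIntegral_const, smul_eq_mul, mul_comm]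
            rfl
        _ ≤ ∫ ω in A, P ω ∂μ := by
            apply setIntegral_mono_on
              ((integrableOn_const_iff).mpr (Or.inr (measure_lt_top μ A)))
              hPint.integrableOn hAm
            intro ω hω
            rw [hWeq ω]
            apply Real.exp_le_exp.mpr
            have hω' : Sn n ω ≤ (n:ℝ) * (δ - ε) := hω
            have := mul_le_mul_of_nonneg_left hω' hl0.le
            linarith
        _ ≤ ∫ ω, P ω ∂μ := setIntegral_le_integral hPint (ae_of_all _ hP0)
        _ ≤ (1 - c*δ)^n := hPB
    have hx41 : Real.exp (l*((n:ℝ)*(δ-ε))) * Real.exp (-(l*((n:ℝ)*(δ-ε)))) = 1 := by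
      rw [← Real.exp_add]; simp
    have step2 : (μ A).toReal ≤ Real.exp (l * ((n:ℝ)*(δ-ε))) * (1 - c*δ)^n := by
      calc (μ A).toReal
          = Real.exp (l*((n:ℝ)*(δ-ε))) * Real.exp (-(l*((n:ℝ)*(δ-ε)))) * (μ A).toReal := by
            rw [hx41, one_mul]
        _ = Real.exp (l*((n:ℝ)*(δ-ε))) * (Real.exp (-(l*((n:ℝ)*(δ-ε)))) * (μ A).toReal) := by
            ring
        _ ≤ Real.exp (l*((n:ℝ)*(δ-ε))) * (1 - c*δ)^n :=
            mul_le_mul_of_nonneg_left step1 (Real.exp_nonneg _)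
    have step3 : Real.exp (l * ((n:ℝ)*(δ-ε))) * (1 - c*δ)^n ≤ Real.exp (-(n:ℝ) * ε^2 / 2) := by
      have h1 : (1 - c*δ)^n ≤ Real.exp (-(c*δ))^n := by
        apply pow_le_pow_left₀ (by linarith)
        linarith [Real.add_one_le_exp (-(c*δ))]
      have h2 : Real.exp (-(c*δ))^n = Real.exp ((n:ℝ) * -(c*δ)) := (Real.exp_nat_mul _ n).symm
      calc Real.exp (l * ((n:ℝ)*(δ-ε))) * (1 - c*δ)^n
          ≤ Real.exp (l * ((n:ℝ)*(δ-ε))) * Real.exp ((n:ℝ) * -(c*δ)) :=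
            mul_le_mul_of_nonneg_left (h1.trans_eq h2) (Real.exp_nonneg _)
        _ = Real.exp (l * ((n:ℝ)*(δ-ε)) + (n:ℝ) * -(c*δ)) := (Real.exp_add _ _).symm
        _ ≤ Real.exp (-(n:ℝ) * ε^2 / 2) := by
            apply Real.exp_le_exp.mpr
            have hn0 : (0:ℝ) ≤ (n:ℝ) := Nat.cast_nonneg n
            nlinarith [mul_le_mul_of_nonneg_left hexp_key hn0]
    exact step2.trans step3
  -- the main per-n bound
  have hpart1 : ∀ n : ℕ,
      (∫ ω, (n : ℝ) / max 1 (Sn n ω) ∂μ)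
        ≤ 1 / (δ - ε) + (n : ℝ) * Real.exp (-(n : ℝ) * ε ^ 2 / 2) := by
    intro n
    set A := {ω | Sn n ω ≤ (n:ℝ) * (δ - ε)} with hA
    have hAm : MeasurableSet A := measurableSet_le (hSm n) measurable_const
    have hmax1 : ∀ ω, (1:ℝ) ≤ max 1 (Sn n ω) := fun ω => le_max_left _ _
    have hfmeas : Measurable (fun ω => (n:ℝ) / max 1 (Sn n ω)) :=
      measurable_const.div (measurable_const.max (hSm n))
    have hf0 : ∀ ω, 0 ≤ (n:ℝ) / max 1 (Sn n ω) := fun ω =>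
      div_nonneg (Nat.cast_nonneg n) (by linarith [hmax1 ω])
    have hfn : ∀ ω, (n:ℝ) / max 1 (Sn n ω) ≤ n := fun ω =>
      div_le_self (Nat.cast_nonneg n) (hmax1 ω)
    have hfint : Integrable (fun ω => (n:ℝ) / max 1 (Sn n ω)) μ :=
      (integrable_const (n:ℝ)).mono' hfmeas.aestronglyMeasurable
        (ae_of_all _ fun ω => by
          rw [Real.norm_eq_abs, abs_le]
          constructor
          · linarith [hf0 ω, Nat.cast_nonneg (α := ℝ) n]
          · simpa [Real.norm_natCast] using hfn ω)
    have hpt : ∀ ω, (n:ℝ) / max 1 (Sn n ω)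
        ≤ 1/(δ-ε) + A.indicator (fun _ => (n:ℝ)) ω := by
      intro ω
      by_cases hω : ω ∈ A
      · rw [Set.indicator_of_mem hω]
        have h1 : 0 < 1/(δ-ε) := div_pos one_pos hδε
        linarith [hfn ω]
      · rw [Set.indicator_of_notMem hω, add_zero]
        have hgt : (n:ℝ)*(δ-ε) < Sn n ω := not_le.mp hω
        rcases Nat.eq_zero_or_pos n with h0 | hpos
        · simp only [h0, Nat.cast_zero, zero_div]
          exact le_of_lt (div_pos one_pos hδε)
        · have hn : (0:ℝ) < n := by exact_mod_cast hpos
          have hnd : 0 < (n:ℝ)*(δ-ε) := by positivity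
          have hmaxd : (n:ℝ)*(δ-ε) ≤ max 1 (Sn n ω) := le_trans hgt.le (le_max_right 1 _)
          calc (n:ℝ) / max 1 (Sn n ω) ≤ (n:ℝ)/((n:ℝ)*(δ-ε)) :=
                div_le_div_of_nonneg_left (Nat.cast_nonneg n) hnd hmaxd
            _ = 1/(δ-ε) := by
                rw [eq_div_iff (by linarith)]
                field_simp
    calc (∫ ω, (n : ℝ) / max 1 (Sn n ω) ∂μ)
        ≤ ∫ ω, (1/(δ-ε) + A.indicator (fun _ => (n:ℝ)) ω) ∂μ := by
          apply integral_mono hfint _ hpt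
          exact (integrable_const _).add ((integrable_const (n:ℝ)).indicator hAm)
      _ = 1/(δ-ε) + (μ A).toReal * n := by
          rw [integral_add (integrable_const _) ((integrable_const (n:ℝ)).indicator hAm),
            integral_const, integral_indicator_const _ hAm]
          simp [measure_univ]
          exact Or.inl rfl
      _ ≤ 1/(δ-ε) + (n : ℝ) * Real.exp (-(n : ℝ) * ε ^ 2 / 2) := by
          have h := htail n
          have := mul_le_mul_of_nonneg_right h (Nat.cast_nonneg (α := ℝ) n)
          nlinarith
  constructor
  · exact hpart1
  · refine ⟨1/(δ-ε) + 2/ε^2, fun n => ?_⟩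
    refine (hpart1 n).trans ?_
    have hb : (n:ℝ) * Real.exp (-(n:ℝ)*ε^2/2) ≤ 2/ε^2 := by
      rcases Nat.eq_zero_or_pos n with h0 | hpos
      · simp only [h0, Nat.cast_zero, zero_mul]
        positivity
      · have hn : (0:ℝ) < n := by exact_mod_cast hpos
        have hx : (0:ℝ) < (n:ℝ)*ε^2/2 := by positivity
        have hxe : (n:ℝ)*ε^2/2 ≤ Real.exp ((n:ℝ)*ε^2/2) :=
          le_trans (by linarith) (Real.add_one_le_exp _)
        have h1 : Real.exp (-(n:ℝ)*ε^2/2) ≤ ((n:ℝ)*ε^2/2)⁻¹ := by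
          rw [show -(n:ℝ)*ε^2/2 = -((n:ℝ)*ε^2/2) by ring, Real.exp_neg]
          exact inv_anti₀ hx hxe
        calc (n:ℝ) * Real.exp (-(n:ℝ)*ε^2/2) ≤ (n:ℝ) * ((n:ℝ)*ε^2/2)⁻¹ :=
              mul_le_mul_of_nonneg_left h1 hn.le
          _ = 2/ε^2 := by
              have hεne : ε ≠ 0 := ne_of_gt hε0
              have hnne : (n:ℝ) ≠ 0 := ne_of_gt hn
              field_simp
    linarith
end

section
/- Theorem V.4.5 of Isaacson–Madsen: let P, P_0, P_1, … be transition kernels with ‖P_n − P‖ → 0 in the uniform operator norm, and suppose P is uniformly geometrically ergodic with invariant distribution π. Then the nonhomogeneous chain with kernels (P_n) is strongly ergodic: for any initial distribution μ, ‖μ P_0 P_1 ⋯ P_n − π‖_{TV} → 0 as n → ∞. -/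
open MeasureTheory ProbabilityTheory Filter Topology

section Aux

variable {X : Type*} [MeasurableSpace X]

lemma aux_integrable {m : Measure X} [IsFiniteMeasure m] {f : X → ℝ}
    (hf : Measurable f) (hb : ∀ x, |f x| ≤ 1) : Integrable f m :=
  (integrable_const (1 : ℝ)).mono' hf.aestronglyMeasurable
    (ae_of_all _ fun x => by simpa [Real.norm_eq_abs] using hb x)

lemma aux_meas (K : Kernel X X) [IsSFiniteKernel K] {f : X → ℝ} (hf : Measurable f) :
    Measurable fun x => ∫ y, f y ∂(K x) := by
  have h : StronglyMeasurable fun p : X × X => f p.2 :=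
    (hf.comp measurable_snd).stronglyMeasurable
  exact h.integral_kernel_prod_right'.measurable

lemma aux_bdd (K : Kernel X X) [IsMarkovKernel K] {f : X → ℝ} (hb : ∀ x, |f x| ≤ 1) (x : X) :
    |∫ y, f y ∂(K x)| ≤ 1 := by
  rw [← Real.norm_eq_abs]
  calc ‖∫ y, f y ∂(K x)‖ ≤ 1 * ((K x) Set.univ).toReal :=
        norm_integral_le_of_norm_le_const (ae_of_all _ fun y => by
          simpa [Real.norm_eq_abs] using hb y)
    _ = 1 := by simp

lemma aux_integral_bind (m : Measure X) [IsProbabilityMeasure m] (K : Kernel X X)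
    [IsMarkovKernel K] {f : X → ℝ} (hf : Measurable f) (hb : ∀ x, |f x| ≤ 1) :
    ∫ y, f y ∂(m.bind (fun x => K x)) = ∫ x, ∫ y, f y ∂(K x) ∂m := by
  have hbind : m.bind (fun x => K x) = (m ⊗ₘ K).map Prod.snd := by
    ext s hs
    rw [Measure.bind_apply hs (Kernel.measurable K).aemeasurable, Measure.map_apply measurable_snd hs,
      Measure.compProd_apply (measurable_snd hs)]
    rfl
  have hprob : IsProbabilityMeasure (m ⊗ₘ K) :=
    ⟨by rw [Measure.compProd_apply_univ]; exact measure_univ⟩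
  have hint : Integrable (fun p : X × X => f p.2) (m ⊗ₘ K) :=
    (integrable_const (1 : ℝ)).mono' (hf.comp measurable_snd).aestronglyMeasurable
      (ae_of_all _ fun p => by simpa [Real.norm_eq_abs] using hb p.2)
  rw [hbind, integral_map measurable_snd.aemeasurable hf.aestronglyMeasurable,
    Measure.integral_compProd hint]

instance iterKer_isMarkov (P : Kernel X X) [IsMarkovKernel P] (k : ℕ) :
    IsMarkovKernel (iterKer P k) := by
  induction k with
  | zero => rw [iterKer]; infer_instance
  | succ n ih => rw [iterKer]; infer_instance

lemma iterKer_succ_int (P : Kernel X X) [IsMarkovKernel P] (k : ℕ) {f : X → ℝ}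
    (hf : Measurable f) (hb : ∀ x, |f x| ≤ 1) (x : X) :
    ∫ y, f y ∂(iterKer P (k + 1) x) = ∫ z, (∫ y, f y ∂(iterKer P k z)) ∂(P x) := by
  show ∫ y, f y ∂((iterKer P k ∘ₖ P) x) = _
  rw [Kernel.comp_apply]
  exact aux_integral_bind (P x) (iterKer P k) hf hb

end Aux

/-- Theorem V.4.5 of Isaacson–Madsen: if `‖Pₙ - P‖ → 0` in the uniform operator norm and
`P` is uniformly geometrically ergodic with invariant distribution `π`, then the
nonhomogeneous chain with kernels `(Pₙ)` is strongly ergodic: for any initial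
distribution `μ`, `‖μ P₀ P₁ ⋯ Pₙ - π‖_TV → 0`. -/
theorem stmt12 {X : Type*} [MeasurableSpace X]
    (P : Kernel X X) (Pn : ℕ → Kernel X X)
    [IsMarkovKernel P] [∀ n, IsMarkovKernel (Pn n)]
    (π : Measure X) [IsProbabilityMeasure π]
    (hπinv : π.bind (fun x => P x) = π)
    (C ρ : ℝ) (hρ : ρ ∈ Set.Ioo (0 : ℝ) 1)
    (hP : ∀ (k : ℕ) (f : X → ℝ), Measurable f → (∀ x, |f x| ≤ 1) →
      ∀ x, |(∫ y, f y ∂(iterKer P k x)) - ∫ y, f y ∂π| ≤ C * ρ ^ k)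
    (hPconv : ∀ ε : ℝ, 0 < ε → ∃ N : ℕ, ∀ n ≥ N,
      ∀ (f : X → ℝ), Measurable f → (∀ x, |f x| ≤ 1) →
        ∀ x, |(∫ y, f y ∂(Pn n x)) - ∫ y, f y ∂(P x)| ≤ ε)
    (μ : Measure X) [IsProbabilityMeasure μ]
    (ν : ℕ → Measure X) (hν0 : ν 0 = μ)
    (hν : ∀ n, ν (n + 1) = (ν n).bind (fun x => Pn n x)) :
    ∀ ε : ℝ, 0 < ε → ∃ N : ℕ, ∀ n ≥ N,
      ∀ (f : X → ℝ), Measurable f → (∀ x, |f x| ≤ 1) →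
        |(∫ x, f x ∂(ν n)) - ∫ x, f x ∂π| ≤ ε := by
  -- all the `ν n` are probability measures
  have hνprob : ∀ n, IsProbabilityMeasure (ν n) := by
    intro n
    induction n with
    | zero => rw [hν0]; infer_instance
    | succ n ih =>
      haveI := ih
      rw [hν n]
      exact ⟨by
        rw [Measure.bind_apply MeasurableSet.univ (Kernel.measurable (Pn n)).aemeasurable]
        simp⟩
  intro ε hε
  -- C is nonnegative
  have hC : 0 ≤ C := by
    have := hP 0 (fun _ => 0) measurable_const (fun x => by norm_num) -- needs inhabited x? no, ∀ x
    -- if X is empty this gives nothing; handle separately below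
    by_cases hX : Nonempty X
    · obtain ⟨x⟩ := hX
      have h := this x
      simpa using h
    · -- X empty : π univ = 1 but π is a measure on empty type, contradiction
      exfalso
      have : π Set.univ = 1 := measure_univ
      have h0 : (Set.univ : Set X) = ∅ := by
        simp [Set.eq_empty_iff_forall_notMem]
        intro x; exact hX ⟨x⟩
      rw [h0] at this
      simp at this
  -- choose k with C * ρ ^ k ≤ ε / 2
  obtain ⟨k, hk⟩ : ∃ k : ℕ, C * ρ ^ k ≤ ε / 2 := by
    have h0 : Tendsto (fun n : ℕ => C * ρ ^ n) atTop (𝓝 (C * 0)) :=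
      (tendsto_pow_atTop_nhds_zero_of_lt_one hρ.1.le hρ.2).const_mul C
    rw [mul_zero] at h0
    exact (h0.eventually (eventually_le_nhds (by linarith))).exists
  -- choose ε₀ and N₀
  set ε₀ : ℝ := ε / (2 * (k + 1)) with hε₀def
  have hε₀pos : 0 < ε₀ := by positivity
  obtain ⟨N₀, hN₀⟩ := hPconv ε₀ hε₀pos
  -- key estimate
  have key : ∀ k' m, N₀ ≤ m → ∀ f : X → ℝ, Measurable f → (∀ x, |f x| ≤ 1) →
      |(∫ x, f x ∂(ν (m + k'))) - ∫ x, (∫ y, f y ∂(iterKer P k' x)) ∂(ν m)| ≤ k' * ε₀ := by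
    intro k'
    induction k' with
    | zero =>
      intro m hm f hf hb
      have h0 : ∀ x, (∫ y, f y ∂(iterKer P 0 x)) = f x := by
        intro x
        show (∫ y, f y ∂(Kernel.id x)) = f x
        rw [Kernel.id_apply, integral_dirac' f x hf.stronglyMeasurable]
      simp [h0]
    | succ k' ih =>
      intro m hm f hf hb
      haveI := hνprob m
      haveI := hνprob (m + 1)
      set g : X → ℝ := fun x => ∫ y, f y ∂(iterKer P k' x) with hgdef
      have hg : Measurable g := aux_meas _ hf
      have hgb : ∀ x, |g x| ≤ 1 := aux_bdd _ hb
      have hA := ih (m + 1) (le_trans hm (Nat.le_succ m)) f hf hb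
      have hB : ∫ x, g x ∂(ν (m + 1)) = ∫ x, (∫ y, g y ∂(Pn m x)) ∂(ν m) := by
        rw [hν m]
        exact aux_integral_bind _ _ hg hgb
      have hpt : ∀ x, |(∫ y, g y ∂(Pn m x)) - ∫ y, g y ∂(P x)| ≤ ε₀ := hN₀ m hm g hg hgb
      have hint1 : Integrable (fun x => ∫ y, g y ∂(Pn m x)) (ν m) :=
        aux_integrable (aux_meas _ hg) (aux_bdd _ hgb)
      have hint2 : Integrable (fun x => ∫ y, g y ∂(P x)) (ν m) :=
        aux_integrable (aux_meas _ hg) (aux_bdd _ hgb)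
      have hC2 : |(∫ x, (∫ y, g y ∂(Pn m x)) ∂(ν m)) - ∫ x, (∫ y, g y ∂(P x)) ∂(ν m)| ≤ ε₀ := by
        rw [← integral_sub hint1 hint2, ← Real.norm_eq_abs]
        calc ‖∫ x, ((∫ y, g y ∂(Pn m x)) - ∫ y, g y ∂(P x)) ∂(ν m)‖
            ≤ ε₀ * ((ν m) Set.univ).toReal :=
              norm_integral_le_of_norm_le_const (ae_of_all _ fun x => by
                simpa [Real.norm_eq_abs] using hpt x)
          _ = ε₀ := by simp
      have hQ : ∀ x, (∫ y, g y ∂(P x)) = ∫ y, f y ∂(iterKer P (k' + 1) x) := by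
        intro x
        rw [iterKer_succ_int P k' hf hb x]
      have hnum : m + (k' + 1) = (m + 1) + k' := by omega
      have heq : (∫ x, f x ∂(ν (m + (k' + 1)))) - ∫ x, (∫ y, f y ∂(iterKer P (k' + 1) x)) ∂(ν m)
          = ((∫ x, f x ∂(ν ((m + 1) + k'))) - ∫ x, g x ∂(ν (m + 1)))
            + ((∫ x, (∫ y, g y ∂(Pn m x)) ∂(ν m)) - ∫ x, (∫ y, g y ∂(P x)) ∂(ν m)) := by
        rw [hnum, hB]
        have : ∫ x, (∫ y, g y ∂(P x)) ∂(ν m)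
            = ∫ x, (∫ y, f y ∂(iterKer P (k' + 1) x)) ∂(ν m) := by
          exact integral_congr_ae (ae_of_all _ hQ)
        rw [this]
        ring
      rw [heq]
      calc |((∫ x, f x ∂(ν ((m + 1) + k'))) - ∫ x, g x ∂(ν (m + 1)))
            + ((∫ x, (∫ y, g y ∂(Pn m x)) ∂(ν m)) - ∫ x, (∫ y, g y ∂(P x)) ∂(ν m))|
          ≤ |(∫ x, f x ∂(ν ((m + 1) + k'))) - ∫ x, g x ∂(ν (m + 1))|
            + |(∫ x, (∫ y, g y ∂(Pn m x)) ∂(ν m)) - ∫ x, (∫ y, g y ∂(P x)) ∂(ν m)| :=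
            abs_add_le _ _
        _ ≤ k' * ε₀ + ε₀ := add_le_add hA hC2
        _ = (k' + 1 : ℕ) * ε₀ := by push_cast; ring
  -- conclude
  refine ⟨N₀ + k, fun n hn f hf hb => ?_⟩
  set m := n - k with hmdef
  have hm : N₀ ≤ m := by omega
  have hmk : m + k = n := by omega
  haveI := hνprob m
  set g : X → ℝ := fun x => ∫ y, f y ∂(iterKer P k x) with hgdef
  have hg : Measurable g := aux_meas _ hf
  have hgb : ∀ x, |g x| ≤ 1 := aux_bdd _ hb
  have h1 : |(∫ x, f x ∂(ν n)) - ∫ x, g x ∂(ν m)| ≤ k * ε₀ := by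
    rw [← hmk]; exact key k m hm f hf hb
  have h2 : |(∫ x, g x ∂(ν m)) - ∫ y, f y ∂π| ≤ C * ρ ^ k := by
    have hsub : (∫ x, g x ∂(ν m)) - ∫ y, f y ∂π
        = ∫ x, (g x - ∫ y, f y ∂π) ∂(ν m) := by
      rw [integral_sub (aux_integrable hg hgb) (integrable_const _)]
      simp
    rw [hsub, ← Real.norm_eq_abs]
    calc ‖∫ x, (g x - ∫ y, f y ∂π) ∂(ν m)‖
        ≤ (C * ρ ^ k) * ((ν m) Set.univ).toReal :=
          norm_integral_le_of_norm_le_const (ae_of_all _ fun x => by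
            simpa [Real.norm_eq_abs] using hP k f hf hb x)
      _ = C * ρ ^ k := by simp
  have h3 : (k : ℝ) * ε₀ ≤ ε / 2 := by
    have hk1 : ((k : ℝ) + 1) * ε₀ = ε / 2 := by
      rw [hε₀def]; field_simp
    nlinarith [hε₀pos]
  calc |(∫ x, f x ∂(ν n)) - ∫ x, f x ∂π|
      ≤ |(∫ x, f x ∂(ν n)) - ∫ x, g x ∂(ν m)|
        + |(∫ x, g x ∂(ν m)) - ∫ x, f x ∂π| := abs_sub_le _ _ _
    _ ≤ k * ε₀ + C * ρ ^ k := add_le_add h1 h2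
    _ ≤ ε / 2 + ε / 2 := add_le_add h3 hk
    _ = ε := by ring
end
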